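/- Let g ≥ 1 and N ≥ 1. Let Δ⁽⁰⁾ be the identity operator on the polynomial ring ℂ[z₁,…,z_g], and for 1 ≤ k ≤ N let Δ⁽ᵏ⁾ be a constant-coefficient differential operator of order ≤ k on ℂ[z₁,…,z_g]. Then the following are equivalent: (a) for all polynomials f, g and all 0 ≤ k ≤ N, Δ⁽ᵏ⁾(fg) = Σ_{r=0}^{k} Δ⁽ʳ⁾(f)·Δ⁽ᵏ⁻ʳ⁾(g); (b) there exist vectors η₁, …, η_N ∈ ℂ^g such that, writing D_i = Σ_ℓ η_{iℓ} ∂/∂z_ℓ, for every 1 ≤ k ≤ N one has Δ⁽ᵏ⁾ = Σ (1/(h₁!⋯h_k!)) D₁^{h₁}⋯D_k^{h_k}, the sum being over all k-tuples of nonnegative integers (h₁,…,h_k) with h₁ + 2h₂ + ⋯ + k·h_k = k. (Equivalently, condition (a) says that for any point x ∈ ℂ^g the map f ↦ Σ_{j=0}^{N} (Δ⁽ʲ⁾f)(x)·tʲ is a ℂ-algebra homomorphism ℂ[z₁,…,z_g] → ℂ[t]/(t^{N+1}), defining a curvi-linear subscheme of length N+1 supported at x.) -/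

import Mathlib

/-- The partial derivative `∂/∂zᵢ` as a `ℂ`-linear endomorphism of `ℂ[z₁,…,z_g]`. -/
noncomputable def pderivEnd {g : ℕ} (i : Fin g) :
    Module.End ℂ (MvPolynomial (Fin g) ℂ) :=
  (MvPolynomial.pderiv i).toLinearMap

/-- The constant-coefficient monomial differential operator `∂^m = ∏ᵢ (∂/∂zᵢ)^{mᵢ}`. -/
noncomputable def monomialOp {g : ℕ} (m : Fin g →₀ ℕ) :
    Module.End ℂ (MvPolynomial (Fin g) ℂ) :=
  (List.ofFn fun i : Fin g => (pderivEnd i) ^ (m i)).prod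

/-- The translation-invariant vector field `D = Σ_ℓ η_ℓ ∂/∂z_ℓ`. -/
noncomputable def vecField {g : ℕ} (η : Fin g → ℂ) :
    Module.End ℂ (MvPolynomial (Fin g) ℂ) :=
  ∑ i, η i • pderivEnd i

/-- Given vector fields `D₁, …, D_k`, the operator
`Δ⁽ᵏ⁾ = Σ_{h₁+2h₂+⋯+k·h_k = k} (1/(h₁!⋯h_k!)) D₁^{h₁}⋯D_k^{h_k}`.  (Any solution `h`
of `Σ (i+1)·hᵢ = k` satisfies `hᵢ ≤ k`, so the sum is over functions `Fin k → Fin (k+1)`.) -/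
noncomputable def deltaFormula {g : ℕ} (k : ℕ)
    (D : Fin k → Module.End ℂ (MvPolynomial (Fin g) ℂ)) :
    Module.End ℂ (MvPolynomial (Fin g) ℂ) :=
  ∑ h ∈ Finset.univ.filter
      (fun h : Fin k → Fin (k + 1) => ∑ i : Fin k, ((i : ℕ) + 1) * ((h i : ℕ)) = k),
    (((∏ i : Fin k, Nat.factorial ((h i : ℕ))) : ℕ) : ℂ)⁻¹ •
      (List.ofFn fun i : Fin k => (D i) ^ ((h i : ℕ))).prod


open Finset MvPolynomial

noncomputable abbrev AOp (g : ℕ) := Module.End ℂ (MvPolynomial (Fin g) ℂ)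

def IsDer {g : ℕ} (T : AOp g) : Prop :=
  ∀ f₁ f₂ : MvPolynomial (Fin g) ℂ, T (f₁*f₂) = T f₁ * f₂ + f₁ * T f₂



/-- recursion for the exponential-formula operators -/
noncomputable def psiOp {g : ℕ} (D : ℕ → AOp g) : ℕ → ℕ → AOp g
  | 0, k => if k = 0 then 1 else 0
  | (M+1), k => ∑ j ∈ Finset.range (k+1), if (M+1)*j ≤ k then
      ((j.factorial : ℂ)⁻¹ • (psiOp D M (k - (M+1)*j) * (D M)^j)) else 0

lemma psiOp_congr {g : ℕ} {D D' : ℕ → AOp g} : ∀ M k, (∀ i < M, D i = D' i) →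
    psiOp D M k = psiOp D' M k := by
  intro M
  induction M with
  | zero => intro k _; rfl
  | succ M ih =>
    intro k h
    rw [psiOp, psiOp]
    refine Finset.sum_congr rfl fun j _ => ?_
    rw [ih _ (fun i hi => h i (by omega)), h M (by omega)]

lemma psiOp_zero_right {g : ℕ} (D : ℕ → AOp g) : ∀ M, psiOp D M 0 = 1 := by
  intro M
  induction M with
  | zero => rfl
  | succ M ih =>
    rw [psiOp]
    simp [ih]

lemma psiOp_stable {g : ℕ} (D : ℕ → AOp g) (M k : ℕ) (h : k ≤ M) :
    psiOp D (M+1) k = psiOp D M k := by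
  rw [psiOp]
  have : ∀ j ∈ Finset.range (k+1), (if (M+1)*j ≤ k then
      ((j.factorial : ℂ)⁻¹ • (psiOp D M (k - (M+1)*j) * (D M)^j)) else 0)
      = if j = 0 then psiOp D M k else 0 := by
    intro j _
    rcases Nat.eq_zero_or_pos j with rfl | hj
    · simp
    · rw [if_neg (by nlinarith), if_neg (by omega)]
  rw [Finset.sum_congr rfl this, Finset.sum_ite_eq' (Finset.range (k+1))]
  simp

lemma psiOp_ge {g : ℕ} (D : ℕ → AOp g) (M M' k : ℕ) (h : k ≤ M) (h' : M ≤ M') :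
    psiOp D M' k = psiOp D M k := by
  induction M' with
  | zero =>
    obtain rfl : M = 0 := by omega
    rfl
  | succ M' ih =>
    rcases Nat.lt_or_ge M (M'+1) with hlt | hge
    · rw [psiOp_stable D M' k (by omega), ih (by omega)]
    · have : M = M' + 1 := by omega
      rw [this]

lemma psiOp_split {g : ℕ} (D : ℕ → AOp g) (n : ℕ) :
    psiOp D (n+1) (n+1) = psiOp D n (n+1) + D n := by
  rw [psiOp]
  have h2 : ∀ j ∈ Finset.range (n+2), (if (n+1)*j ≤ n+1 then
      ((j.factorial : ℂ)⁻¹ • (psiOp D n (n+1 - (n+1)*j) * (D n)^j)) else 0)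
      = (if j = 0 then psiOp D n (n+1) else 0) + (if j = 1 then D n else 0) := by
    intro j _
    match j with
    | 0 => simp
    | 1 => simp [psiOp_zero_right]
    | (m+2) => rw [if_neg (by nlinarith), if_neg (by omega), if_neg (by omega)]; simp
  rw [Finset.sum_congr rfl h2, Finset.sum_add_distrib,
    Finset.sum_ite_eq' (Finset.range (n+2)), Finset.sum_ite_eq' (Finset.range (n+2))]
  simp



lemma pow_apply_succ {g : ℕ} (T : AOp g) (n : ℕ) (f : MvPolynomial (Fin g) ℂ) :
    (T^(n+1)) f = T ((T^n) f) := by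
  rw [pow_succ']; rfl

lemma pow_leibniz {g : ℕ} {T : AOp g} (hT : IsDer T) (n : ℕ)
    (f₁ f₂ : MvPolynomial (Fin g) ℂ) :
    (T^n) (f₁*f₂) = ∑ a ∈ range (n+1),
      (n.choose a) • ((T^a) f₁ * (T^(n-a)) f₂) := by
  induction n with
  | zero => simp
  | succ n ih =>
    rw [pow_apply_succ, ih, map_sum]
    have hterm : ∀ a ∈ range (n+1),
        T ((n.choose a) • ((T^a) f₁ * (T^(n-a)) f₂))
        = (n.choose a) • ((T^(a+1)) f₁ * (T^(n-a)) f₂)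
          + (n.choose a) • ((T^a) f₁ * (T^(n-a+1)) f₂) := by
      intro a _
      rw [map_nsmul, hT, smul_add, pow_apply_succ, pow_apply_succ]
    rw [Finset.sum_congr rfl hterm, Finset.sum_add_distrib]
    have e2 : ∑ a ∈ range (n+1), (n.choose a) • ((T^a) f₁ * (T^(n-a+1)) f₂)
        = (∑ a ∈ range n, (n.choose (a+1)) • ((T^(a+1)) f₁ * (T^(n-(a+1)+1)) f₂))
          + (n.choose 0) • ((T^0) f₁ * (T^(n-0+1)) f₂) :=
      Finset.sum_range_succ' _ n
    have etgt : ∑ a ∈ range (n+1+1), ((n+1).choose a) • ((T^a) f₁ * (T^(n+1-a)) f₂)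
        = (∑ a ∈ range (n+1), ((n+1).choose (a+1)) • ((T^(a+1)) f₁ * (T^(n+1-(a+1))) f₂))
          + ((n+1).choose 0) • ((T^0) f₁ * (T^(n+1-0)) f₂) :=
      Finset.sum_range_succ' _ (n+1)
    rw [etgt, e2]
    have hsplit : ∀ a ∈ range (n+1),
        ((n+1).choose (a+1)) • ((T^(a+1)) f₁ * (T^(n+1-(a+1))) f₂)
        = (n.choose a) • ((T^(a+1)) f₁ * (T^(n-a)) f₂)
          + (n.choose (a+1)) • ((T^(a+1)) f₁ * (T^(n-a)) f₂) := by
      intro a ha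
      rw [Nat.choose_succ_succ, add_nsmul]
      have hx : n+1-(a+1) = n-a := by omega
      rw [hx]
    rw [Finset.sum_congr rfl hsplit, Finset.sum_add_distrib]
    have e3 : ∑ a ∈ range (n+1), (n.choose (a+1)) • ((T^(a+1)) f₁ * (T^(n-a)) f₂)
        = ∑ a ∈ range n, (n.choose (a+1)) • ((T^(a+1)) f₁ * (T^(n-(a+1)+1)) f₂) := by
      rw [Finset.sum_range_succ, Nat.choose_succ_self, zero_smul, add_zero]
      refine Finset.sum_congr rfl fun a ha => ?_
      simp only [mem_range] at ha
      have hx : n-(a+1)+1 = n-a := by omega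
      rw [hx]
    rw [e3]
    simp only [Nat.choose_zero_right, Nat.sub_zero]
    abel

lemma pow_leibniz' {g : ℕ} {T : AOp g} (hT : IsDer T) (n : ℕ)
    (f₁ f₂ : MvPolynomial (Fin g) ℂ) :
    (n.factorial : ℂ)⁻¹ • (T^n) (f₁*f₂) = ∑ a ∈ range (n+1),
      ((a.factorial : ℂ)⁻¹ • (T^a) f₁) * (((n-a).factorial : ℂ)⁻¹ • (T^(n-a)) f₂) := by
  rw [pow_leibniz hT, Finset.smul_sum]
  refine Finset.sum_congr rfl fun a ha => ?_
  simp only [mem_range] at ha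
  rw [smul_mul_smul_comm, ← Nat.cast_smul_eq_nsmul ℂ, smul_smul]
  congr 1
  have hkey := Nat.choose_mul_factorial_mul_factorial (Nat.lt_succ_iff.mp ha)
  have h1 : (n.factorial : ℂ) ≠ 0 := Nat.cast_ne_zero.mpr (Nat.factorial_ne_zero n)
  have h2 : (a.factorial : ℂ) ≠ 0 := Nat.cast_ne_zero.mpr (Nat.factorial_ne_zero a)
  have h3 : ((n-a).factorial : ℂ) ≠ 0 := Nat.cast_ne_zero.mpr (Nat.factorial_ne_zero _)
  have : ((n.choose a : ℂ)) * a.factorial * (n-a).factorial = n.factorial := by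
    exact_mod_cast congrArg (Nat.cast : ℕ → ℂ) hkey
  field_simp
  linear_combination this



lemma ite_op_apply {g : ℕ} (P : Prop) [Decidable P] (T : AOp g) (f : MvPolynomial (Fin g) ℂ) :
    (if P then T else 0) f = if P then T f else 0 := by
  split_ifs <;> simp

lemma ite_zero_mul_ite_zero' {β : Type*} [MulZeroClass β] (P Q : Prop) [Decidable P] [Decidable Q]
    (x y : β) : (if P then x else 0) * (if Q then y else 0) = if P ∧ Q then x * y else 0 := by
  split_ifs <;> first | rfl | simp_all

lemma helper_shift {β : Type*} [AddCommMonoid β] (c k : ℕ) (F : ℕ → β) :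
    ∑ u ∈ range (k+1), (if c ≤ u then F (u - c) else 0)
      = ∑ r ∈ range (k+1), (if c + r ≤ k then F r else 0) := by
  rw [← Finset.sum_filter, ← Finset.sum_filter]
  have h1 : (range (k+1)).filter (fun u => c ≤ u) = Finset.Ico c (k+1) := by
    ext u; simp [Finset.mem_Ico]; omega
  have h2 : (range (k+1)).filter (fun r => c + r ≤ k) = range (k+1-c) := by
    ext r; simp; omega
  rw [h1, h2, Finset.sum_Ico_eq_sum_range]
  refine Finset.sum_congr rfl fun i _ => ?_
  congr 1
  omega

lemma helper_ext {β : Type*} [AddCommMonoid β] {k' k : ℕ} (h : k' ≤ k) (F : ℕ → β) :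
    ∑ r ∈ range (k'+1), F r = ∑ r ∈ range (k+1), (if r ≤ k' then F r else 0) := by
  rw [← Finset.sum_filter]
  congr 1
  ext r; simp; omega

lemma helper_ite_sum {β : Type*} [AddCommMonoid β] {ι : Type*} (P : Prop) [Decidable P]
    (s : Finset ι) (F : ι → β) :
    (if P then ∑ i ∈ s, F i else 0) = ∑ i ∈ s, (if P then F i else 0) := by
  split_ifs <;> simp

lemma psiOp_leibniz {g : ℕ} (D : ℕ → AOp g) (hD : ∀ i, IsDer (D i)) :
    ∀ M k (f₁ f₂ : MvPolynomial (Fin g) ℂ),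
      psiOp D M k (f₁*f₂) = ∑ r ∈ range (k+1), psiOp D M r f₁ * psiOp D M (k-r) f₂ := by
  intro M
  induction M with
  | zero =>
    intro k f₁ f₂
    rcases Nat.eq_zero_or_pos k with rfl | hk
    · simp [psiOp]
    · rw [show psiOp D 0 k = if k = 0 then 1 else 0 from rfl, if_neg (by omega),
        LinearMap.zero_apply]
      symm
      apply Finset.sum_eq_zero
      intro r hr
      rcases Nat.eq_zero_or_pos r with rfl | hr0
      · rw [show psiOp D 0 (k - 0) = if k - 0 = 0 then 1 else 0 from rfl,
          if_neg (by omega), LinearMap.zero_apply, mul_zero]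
      · rw [show psiOp D 0 r = if r = 0 then 1 else 0 from rfl,
          if_neg (by omega), LinearMap.zero_apply, zero_mul]
  | succ M ih =>
    intro k f₁ f₂
    have hL1 : psiOp D (M+1) k (f₁*f₂)
        = ∑ j ∈ range (k+1), if (M+1)*j ≤ k then
            (∑ a ∈ range (j+1), ∑ r ∈ range ((k-(M+1)*j)+1),
              psiOp D M r ((a.factorial:ℂ)⁻¹ • ((D M ^ a) f₁))
                * psiOp D M ((k-(M+1)*j)-r) (((j-a).factorial:ℂ)⁻¹ • ((D M ^ (j-a)) f₂)))
          else 0 := by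
      rw [psiOp, LinearMap.sum_apply]
      refine Finset.sum_congr rfl fun j hj => ?_
      rw [ite_op_apply]
      split_ifs with hcond
      · rw [LinearMap.smul_apply, Module.End.mul_apply, ← map_smul,
          pow_leibniz' (hD M) j f₁ f₂, map_sum]
        exact Finset.sum_congr rfl fun a ha => ih _ _ _
      · rfl
    have hL2 : psiOp D (M+1) k (f₁*f₂)
        = ∑ j ∈ range (k+1), ∑ a ∈ range (k+1), ∑ r ∈ range (k+1),
            if (M+1)*j ≤ k ∧ a ≤ j ∧ r ≤ k-(M+1)*j then
              psiOp D M r ((a.factorial:ℂ)⁻¹ • ((D M ^ a) f₁))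
                * psiOp D M ((k-(M+1)*j)-r) (((j-a).factorial:ℂ)⁻¹ • ((D M ^ (j-a)) f₂))
            else 0 := by
      rw [hL1]
      refine Finset.sum_congr rfl fun j hj => ?_
      simp only [mem_range] at hj
      split_ifs with hcond
      · have e1 : ∀ a : ℕ, (∑ r ∈ range ((k-(M+1)*j)+1),
              psiOp D M r ((a.factorial:ℂ)⁻¹ • ((D M ^ a) f₁))
                * psiOp D M ((k-(M+1)*j)-r) (((j-a).factorial:ℂ)⁻¹ • ((D M ^ (j-a)) f₂)))
            = ∑ r ∈ range (k+1), if r ≤ k-(M+1)*j then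
              psiOp D M r ((a.factorial:ℂ)⁻¹ • ((D M ^ a) f₁))
                * psiOp D M ((k-(M+1)*j)-r) (((j-a).factorial:ℂ)⁻¹ • ((D M ^ (j-a)) f₂)) else 0 :=
          fun a => helper_ext (Nat.sub_le _ _) _
        rw [Finset.sum_congr rfl fun a _ => e1 a, helper_ext (show j ≤ k by omega)]
        refine Finset.sum_congr rfl fun a _ => ?_
        rw [helper_ite_sum]
        refine Finset.sum_congr rfl fun r _ => ?_
        split_ifs <;> first | rfl | tauto
      · symm
        refine Finset.sum_eq_zero fun a _ => Finset.sum_eq_zero fun r _ => if_neg (by tauto)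
    have hL3 : psiOp D (M+1) k (f₁*f₂)
        = ∑ p ∈ ((range (k+1)) ×ˢ ((range (k+1)) ×ˢ (range (k+1)))).filter
            (fun p : ℕ × ℕ × ℕ => (M+1)*p.1 ≤ k ∧ p.2.1 ≤ p.1 ∧ p.2.2 ≤ k-(M+1)*p.1),
            psiOp D M p.2.2 (((p.2.1).factorial:ℂ)⁻¹ • ((D M ^ p.2.1) f₁))
              * psiOp D M ((k-(M+1)*p.1)-p.2.2)
                  (((p.1-p.2.1).factorial:ℂ)⁻¹ • ((D M ^ (p.1-p.2.1)) f₂)) := by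
      rw [hL2, Finset.sum_filter, Finset.sum_product]
      refine Finset.sum_congr rfl fun j _ => ?_
      rw [Finset.sum_product]
    have hR1 : ∀ u, u ≤ k → psiOp D (M+1) u f₁
        = ∑ a ∈ range (k+1), if (M+1)*a ≤ u then
            psiOp D M (u-(M+1)*a) ((a.factorial:ℂ)⁻¹ • ((D M ^ a) f₁)) else 0 := by
      intro u hu
      rw [psiOp, LinearMap.sum_apply,
        Finset.sum_subset (Finset.range_subset_range.mpr (by omega : u+1 ≤ k+1)) ?_]
      · refine Finset.sum_congr rfl fun a ha => ?_
        rw [ite_op_apply]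
        split_ifs with h
        · rw [LinearMap.smul_apply, Module.End.mul_apply, ← map_smul]
        · rfl
      · intro a ha hna
        simp only [mem_range] at ha hna
        have : a ≤ (M+1)*a := Nat.le_mul_of_pos_left a (by omega)
        rw [ite_op_apply, if_neg (by omega)]
    have hR2 : ∀ u, u ≤ k → psiOp D (M+1) (k-u) f₂
        = ∑ b ∈ range (k+1), if (M+1)*b ≤ k-u then
            psiOp D M ((k-u)-(M+1)*b) ((b.factorial:ℂ)⁻¹ • ((D M ^ b) f₂)) else 0 := by
      intro u hu
      rw [psiOp, LinearMap.sum_apply,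
        Finset.sum_subset (Finset.range_subset_range.mpr (by omega : k-u+1 ≤ k+1)) ?_]
      · refine Finset.sum_congr rfl fun b hb => ?_
        rw [ite_op_apply]
        split_ifs with h
        · rw [LinearMap.smul_apply, Module.End.mul_apply, ← map_smul]
        · rfl
      · intro b hb hnb
        simp only [mem_range] at hb hnb
        have : b ≤ (M+1)*b := Nat.le_mul_of_pos_left b (by omega)
        rw [ite_op_apply, if_neg (by omega)]
    have hR : ∑ r ∈ range (k+1), psiOp D (M+1) r f₁ * psiOp D (M+1) (k-r) f₂
        = ∑ p ∈ ((range (k+1)) ×ˢ ((range (k+1)) ×ˢ (range (k+1)))).filter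
            (fun p : ℕ × ℕ × ℕ => (M+1)*p.2.1 ≤ p.1 ∧ (M+1)*p.2.2 ≤ k-p.1),
            psiOp D M (p.1-(M+1)*p.2.1) (((p.2.1).factorial:ℂ)⁻¹ • ((D M ^ p.2.1) f₁))
              * psiOp D M ((k-p.1)-(M+1)*p.2.2)
                  (((p.2.2).factorial:ℂ)⁻¹ • ((D M ^ p.2.2) f₂)) := by
      rw [Finset.sum_filter, Finset.sum_product]
      refine Finset.sum_congr rfl fun u hu => ?_
      simp only [mem_range] at hu
      rw [hR1 u (by omega), hR2 u (by omega), Finset.sum_mul_sum, Finset.sum_product]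
      refine Finset.sum_congr rfl fun a _ => Finset.sum_congr rfl fun b _ => ?_
      rw [ite_zero_mul_ite_zero']
    rw [hL3, hR]
    refine Finset.sum_nbij' (fun p => ((M+1)*p.2.1 + p.2.2, p.2.1, p.1 - p.2.1))
      (fun p => (p.2.1 + p.2.2, p.2.1, p.1 - (M+1)*p.2.1)) ?_ ?_ ?_ ?_ ?_
    · rintro ⟨j, a, r⟩ hp
      simp only [Finset.mem_filter, Finset.mem_product, Finset.mem_range] at hp ⊢
      have h1 : (M+1)*a ≤ (M+1)*j := Nat.mul_le_mul_left _ hp.2.2.1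
      have h2 : (M+1)*(j-a) = (M+1)*j - (M+1)*a := Nat.mul_sub _ _ _
      omega
    · rintro ⟨u, a, b⟩ hp
      simp only [Finset.mem_filter, Finset.mem_product, Finset.mem_range] at hp ⊢
      have h1 : (M+1)*(a+b) = (M+1)*a + (M+1)*b := Nat.mul_add _ _ _
      have ha : a ≤ (M+1)*a := Nat.le_mul_of_pos_left a (by omega)
      have hb : b ≤ (M+1)*b := Nat.le_mul_of_pos_left b (by omega)
      omega
    · rintro ⟨j, a, r⟩ hp
      simp only [Finset.mem_filter, Finset.mem_product, Finset.mem_range] at hp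
      simp only [Prod.mk.injEq]
      exact ⟨by omega, trivial, by omega⟩
    · rintro ⟨u, a, b⟩ hp
      simp only [Finset.mem_filter, Finset.mem_product, Finset.mem_range] at hp
      simp only [Prod.mk.injEq]
      exact ⟨by omega, trivial, by omega⟩
    · rintro ⟨j, a, r⟩ hp
      simp only [Finset.mem_filter, Finset.mem_product, Finset.mem_range] at hp
      have h1 : (M+1)*a ≤ (M+1)*j := Nat.mul_le_mul_left _ hp.2.2.1
      have h2 : (M+1)*(j-a) = (M+1)*j - (M+1)*a := Nat.mul_sub _ _ _
      have e1 : (M+1)*a + r - (M+1)*a = r := by omega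
      have e2 : k - ((M+1)*a + r) - (M+1)*(j-a) = (k - (M+1)*j) - r := by omega
      simp only []
      rw [e1, e2]



lemma filter_piFinset_ext {M k' k : ℕ} (hkk : k' ≤ k) :
    (Fintype.piFinset (fun _ : Fin M => range (k'+1))).filter
      (fun h : Fin M → ℕ => ∑ i : Fin M, (i.1+1) * h i = k')
    = (Fintype.piFinset (fun _ : Fin M => range (k+1))).filter
      (fun h : Fin M → ℕ => ∑ i : Fin M, (i.1+1) * h i = k') := by
  ext h
  simp only [mem_filter, Fintype.mem_piFinset, mem_range]
  constructor
  · rintro ⟨hb, hc⟩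
    exact ⟨fun i => by have := hb i; omega, hc⟩
  · rintro ⟨hb, hc⟩
    refine ⟨fun i => ?_, hc⟩
    have h1 : (i.1+1) * h i ≤ k' :=
      hc ▸ Finset.single_le_sum (f := fun i : Fin M => (i.1+1) * h i)
        (fun j _ => Nat.zero_le _) (mem_univ i)
    have h2 : h i ≤ (i.1+1) * h i := Nat.le_mul_of_pos_left _ (by omega)
    omega

lemma psiOp_closed {g : ℕ} (D : ℕ → AOp g) : ∀ M k, psiOp D M k
    = ∑ h ∈ (Fintype.piFinset (fun _ : Fin M => range (k+1))).filter
        (fun h : Fin M → ℕ => ∑ i : Fin M, (i.1+1) * h i = k),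
      ((∏ i : Fin M, (h i).factorial : ℕ) : ℂ)⁻¹ •
        (List.ofFn fun i : Fin M => (D i.1) ^ (h i)).prod := by
  intro M
  induction M with
  | zero =>
    intro k
    rcases Nat.eq_zero_or_pos k with rfl | hk
    · rw [show psiOp D 0 0 = 1 from rfl,
        Finset.filter_true_of_mem (fun h _ => by simp)]
      rw [Finset.sum_congr rfl (fun h _ => (by simp : _ = (1 : AOp g))),
        Finset.sum_const, Fintype.card_piFinset]
      simp
    · rw [show psiOp D 0 k = if k = 0 then 1 else 0 from rfl, if_neg (by omega),
        Finset.filter_false_of_mem (fun h _ => by simp; omega), Finset.sum_empty]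
  | succ M ih =>
    intro k
    have hpair : (∑ h ∈ (Fintype.piFinset (fun _ : Fin (M+1) => range (k+1))).filter
          (fun h : Fin (M+1) → ℕ => ∑ i : Fin (M+1), (i.1+1) * h i = k),
        ((∏ i : Fin (M+1), (h i).factorial : ℕ) : ℂ)⁻¹ •
          (List.ofFn fun i : Fin (M+1) => (D i.1) ^ (h i)).prod)
        = ∑ p ∈ ((range (k+1)) ×ˢ (Fintype.piFinset (fun _ : Fin M => range (k+1)))).filter
            (fun p : ℕ × (Fin M → ℕ) => (∑ i : Fin M, (i.1+1) * p.2 i) + (M+1)*p.1 = k),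
          ((p.1.factorial : ℂ)⁻¹ * ((∏ i : Fin M, (p.2 i).factorial : ℕ) : ℂ)⁻¹) •
            ((List.ofFn fun i : Fin M => (D i.1) ^ (p.2 i)).prod * (D M)^p.1) := by
      refine Finset.sum_nbij' (fun h => (h (Fin.last M), fun i : Fin M => h i.castSucc))
        (fun p => Fin.snoc p.2 p.1) ?_ ?_ ?_ ?_ ?_
      · intro h hh
        simp only [mem_filter, Fintype.mem_piFinset, mem_range, mem_product] at hh ⊢
        obtain ⟨hb, hc⟩ := hh
        refine ⟨⟨hb _, fun i => hb _⟩, ?_⟩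
        rw [Fin.sum_univ_castSucc] at hc
        simpa using hc
      · intro p hp
        simp only [mem_filter, Fintype.mem_piFinset, mem_range, mem_product] at hp ⊢
        obtain ⟨⟨hb1, hb2⟩, hc⟩ := hp
        constructor
        · intro i
          induction i using Fin.lastCases with
          | last => simpa using hb1
          | cast i => simpa using hb2 i
        · rw [Fin.sum_univ_castSucc]
          simpa using hc
      · intro h _
        exact Fin.snoc_init_self h
      · rintro ⟨j, h'⟩ _
        simp only [Prod.mk.injEq]
        exact ⟨by simp, funext fun i => by simp⟩
      · intro h _
        rw [Fin.prod_univ_castSucc, List.ofFn_succ', Nat.cast_mul, mul_inv]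
        simp only [List.prod_concat, Fin.val_last, Fin.coe_castSucc]
        rw [mul_comm]
    rw [hpair, psiOp, Finset.sum_filter, Finset.sum_product]
    refine Finset.sum_congr rfl fun j hj => ?_
    simp only [mem_range] at hj
    split_ifs with hcond
    · rw [ih (k - (M+1)*j), filter_piFinset_ext (show k - (M+1)*j ≤ k by omega),
        Finset.sum_mul, Finset.smul_sum, Finset.sum_filter]
      refine Finset.sum_congr rfl fun h' _ => ?_
      have hiff : (∑ i : Fin M, (i.1+1) * h' i = k - (M+1)*j)
          ↔ ((∑ i : Fin M, (i.1+1) * h' i) + (M+1)*j = k) := by omega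
      split_ifs with h1 h2 h3
      · rw [smul_mul_assoc, smul_smul]
      · exact absurd (hiff.mp h1) h2
      · exact absurd (hiff.mpr h3) h1
      · rfl
    · symm
      refine Finset.sum_eq_zero fun h' _ => if_neg fun hcc => ?_
      simp only at hcc
      exact hcond (by omega)
lemma deltaFormula_eq_psiOp {g : ℕ} (D : ℕ → AOp g) (k : ℕ) :
    deltaFormula k (fun i : Fin k => D i.1) = psiOp D k k := by
  rw [psiOp_closed, deltaFormula]
  refine Finset.sum_bij (fun h _ => fun i : Fin k => (h i : ℕ)) ?_ ?_ ?_ ?_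
  · intro h hh
    simp only [mem_filter, mem_univ, true_and] at hh
    simp only [mem_filter, Fintype.mem_piFinset, mem_range]
    exact ⟨fun i => (h i).2, hh⟩
  · intro h₁ hh₁ h₂ hh₂ he
    funext i
    exact Fin.ext (congrFun he i)
  · intro h' hh'
    simp only [mem_filter, Fintype.mem_piFinset, mem_range] at hh'
    refine ⟨fun i => (⟨h' i, hh'.1 i⟩ : Fin (k+1)), ?_, rfl⟩
    simp only [mem_filter, mem_univ, true_and]
    exact hh'.2
  · intro h _
    rfl



lemma pderivEnd_apply {g : ℕ} (i : Fin g) (f : MvPolynomial (Fin g) ℂ) :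
    pderivEnd i f = MvPolynomial.pderiv i f := rfl

lemma pderiv_pderiv_comm {g : ℕ} (i j : Fin g) (f : MvPolynomial (Fin g) ℂ) :
    pderiv i (pderiv j f) = pderiv j (pderiv i f) := by
  induction f using MvPolynomial.induction_on' with
  | monomial s a =>
    rcases eq_or_ne i j with rfl | hij
    · rfl
    · simp only [pderiv_monomial]
      have he : s - Finsupp.single j 1 - Finsupp.single i 1
          = s - Finsupp.single i 1 - Finsupp.single j 1 := by
        ext x
        simp only [Finsupp.tsub_apply]
        omega
      rw [he]
      congr 1
      rw [Finsupp.tsub_apply, Finsupp.tsub_apply, Finsupp.single_eq_of_ne hij,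
        Finsupp.single_eq_of_ne (Ne.symm hij)]
      simp only [Nat.sub_zero]
      ring
  | add p q hp hq => simp [hp, hq]

lemma commute_pderivEnd {g : ℕ} (j i : Fin g) : Commute (pderivEnd j) (pderivEnd i) := by
  apply LinearMap.ext
  intro f
  rw [Module.End.mul_apply, Module.End.mul_apply]
  exact pderiv_pderiv_comm j i f

lemma commute_monomialOp {g : ℕ} (j : Fin g) (m : Fin g →₀ ℕ) :
    Commute (pderivEnd j) (monomialOp m) := by
  apply Commute.list_prod_right
  intro x hx
  rw [List.mem_ofFn] at hx
  obtain ⟨i, rfl⟩ := hx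
  exact (commute_pderivEnd j i).pow_right _

lemma commute_vecField {g : ℕ} (j : Fin g) (η : Fin g → ℂ) :
    Commute (pderivEnd j) (vecField η) := by
  apply Commute.sum_right
  intro i _
  exact (commute_pderivEnd j i).smul_right _

lemma isDer_vecField {g : ℕ} (η : Fin g → ℂ) : IsDer (vecField η) := by
  intro f₁ f₂
  simp only [vecField, LinearMap.sum_apply, LinearMap.smul_apply, pderivEnd_apply,
    pderiv_mul, smul_add, Finset.sum_add_distrib]
  congr 1
  · rw [Finset.sum_mul]
    exact Finset.sum_congr rfl fun i _ => (smul_mul_assoc _ _ _).symm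
  · rw [Finset.mul_sum]
    exact Finset.sum_congr rfl fun i _ => (mul_smul_comm _ _ _).symm

lemma coeff_pderiv' {g : ℕ} (j : Fin g) (m : Fin g →₀ ℕ) (p : MvPolynomial (Fin g) ℂ) :
    coeff m (pderiv j p) = ((m j : ℂ) + 1) * coeff (m + Finsupp.single j 1) p := by
  induction p using MvPolynomial.induction_on' with
  | monomial s a =>
    rw [pderiv_monomial, coeff_monomial, coeff_monomial]
    split_ifs with h1 h2 h3
    · have hsj : s j = m j + 1 := by
        rw [h2, Finsupp.add_apply, Finsupp.single_eq_same]
      rw [hsj]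
      push_cast
      ring
    · by_cases hsj : s j = 0
      · simp [hsj]
      · exact absurd (by rw [← h1, tsub_add_cancel_of_le
          (Finsupp.single_le_iff.mpr (by omega))]) h2
    · exact absurd (by rw [h3, add_tsub_cancel_right]) h1
    · simp
  | add p q hp hq => simp [hp, hq, mul_add]

lemma pderiv_zero_imp_constant {g : ℕ} (p : MvPolynomial (Fin g) ℂ)
    (h : ∀ j, pderiv j p = 0) : p = C (constantCoeff p) := by
  apply MvPolynomial.ext
  intro m
  rcases eq_or_ne m 0 with rfl | hm
  · simp [coeff_C]
    rfl
  · obtain ⟨j, hj⟩ : ∃ j, m j ≠ 0 := by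
      by_contra hc
      push_neg at hc
      exact hm (Finsupp.ext hc)
    have h0 := coeff_pderiv' j (m - Finsupp.single j 1) p
    rw [h j, coeff_zero] at h0
    have hms : m - Finsupp.single j 1 + Finsupp.single j 1 = m :=
      tsub_add_cancel_of_le (Finsupp.single_le_iff.mpr (by omega))
    rw [hms] at h0
    have hne : ((((m - Finsupp.single j 1 : Fin g →₀ ℕ)) j : ℕ) : ℂ) + 1 ≠ 0 :=
      Nat.cast_add_one_ne_zero _
    have : coeff m p = 0 := ((mul_eq_zero.mp h0.symm).resolve_left hne)
    rw [this, coeff_C, if_neg (Ne.symm hm)]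

lemma isDer_eq_vecField {g : ℕ} (T : AOp g) (hT : IsDer T)
    (hC : ∀ j, Commute (pderivEnd j) T) :
    T = vecField (fun ℓ => constantCoeff (T (X ℓ))) := by
  have h1 : T 1 = 0 := by
    have := hT 1 1
    rw [mul_one, mul_one, one_mul] at this
    exact left_eq_add.mp this
  have hXconst : ∀ ℓ j, pderiv j (T (X ℓ)) = 0 := by
    intro ℓ j
    have hcomm := DFunLike.congr_fun (hC j).eq (X ℓ)
    rw [Module.End.mul_apply, Module.End.mul_apply, pderivEnd_apply, pderivEnd_apply] at hcomm
    rw [hcomm]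
    rcases eq_or_ne ℓ j with rfl | hne
    · rw [pderiv_X_self, h1]
    · rw [pderiv_X_of_ne hne, map_zero]
  have hconst : ∀ ℓ, T (X ℓ) = C (constantCoeff (T (X ℓ))) := fun ℓ =>
    pderiv_zero_imp_constant _ (hXconst ℓ)
  -- bundle as derivations
  let D1 : Derivation ℂ (MvPolynomial (Fin g) ℂ) (MvPolynomial (Fin g) ℂ) :=
    { toLinearMap := T
      map_one_eq_zero' := h1
      leibniz' := fun a b => by
        rw [hT a b, smul_eq_mul, smul_eq_mul]
        ring }
  let D2 : Derivation ℂ (MvPolynomial (Fin g) ℂ) (MvPolynomial (Fin g) ℂ) :=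
    { toLinearMap := vecField (fun ℓ => constantCoeff (T (X ℓ)))
      map_one_eq_zero' := by
        have := isDer_vecField (fun ℓ => constantCoeff (T (X ℓ))) 1 1
        rw [mul_one, mul_one, one_mul] at this
        exact left_eq_add.mp this
      leibniz' := fun a b => by
        rw [isDer_vecField _ a b, smul_eq_mul, smul_eq_mul]
        ring }
  have hvecX : ∀ (η : Fin g → ℂ) ℓ, vecField η (X ℓ) = C (η ℓ) := by
    intro η ℓ
    rw [vecField, LinearMap.sum_apply, Finset.sum_eq_single ℓ]
    · rw [LinearMap.smul_apply, pderivEnd_apply, pderiv_X_self, smul_eq_C_mul, mul_one]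
    · intro i _ hne
      rw [LinearMap.smul_apply, pderivEnd_apply, pderiv_X_of_ne (Ne.symm hne), smul_zero]
    · intro habs
      exact absurd (Finset.mem_univ ℓ) habs
  have hext : D1 = D2 := by
    apply MvPolynomial.derivation_ext
    intro i
    show T (X i) = vecField _ (X i)
    rw [hvecX, ← hconst]
  exact congrArg Derivation.toLinearMap hext

/-- Let `g, N ≥ 1`, let `Δ⁽⁰⁾` be the identity operator on
`ℂ[z₁,…,z_g]` and for `1 ≤ k ≤ N` let `Δ⁽ᵏ⁾` be a constant-coefficient differential
operator of order `≤ k`.  Then `Δ` satisfies the Leibniz-type identities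
`Δ⁽ᵏ⁾(fg) = Σ_{r=0}^{k} Δ⁽ʳ⁾(f)·Δ⁽ᵏ⁻ʳ⁾(g)` for all `k ≤ N` (equivalently,
`f ↦ Σ (Δ⁽ʲ⁾f)(x) tʲ` is a `ℂ`-algebra homomorphism into `ℂ[t]/(t^{N+1})`) if and only
if there are vectors `η₁, …, η_N ∈ ℂ^g` such that, with `D_i = Σ_ℓ η_{iℓ} ∂/∂z_ℓ`,
`Δ⁽ᵏ⁾ = Σ_{h₁+2h₂+⋯+k·h_k=k} (1/(h₁!⋯h_k!)) D₁^{h₁}⋯D_k^{h_k}` for `1 ≤ k ≤ N`. -/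

lemma commute_psiOp {g : ℕ} (j : Fin g) (D : ℕ → AOp g)
    (h : ∀ i, Commute (pderivEnd j) (D i)) :
    ∀ M k, Commute (pderivEnd j) (psiOp D M k) := by
  intro M
  induction M with
  | zero =>
    intro k
    rw [show psiOp D 0 k = if k = 0 then 1 else 0 from rfl]
    split_ifs
    · exact Commute.one_right _
    · exact Commute.zero_right _
  | succ M ih =>
    intro k
    rw [psiOp]
    apply Commute.sum_right
    intro i _
    split_ifs with hc
    · exact (((ih _).mul_right ((h M).pow_right _))).smul_right _
    · exact Commute.zero_right _

noncomputable def buildD {g : ℕ} (Δ : ℕ → AOp g) : ℕ → (ℕ → AOp g)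
  | 0 => fun _ => vecField (fun _ => 0)
  | (n+1) => Function.update (buildD Δ n) n
      (vecField (fun ℓ => MvPolynomial.constantCoeff
        ((Δ (n+1) - psiOp (buildD Δ n) n (n+1)) (MvPolynomial.X ℓ))))

noncomputable def Dseq {g : ℕ} (Δ : ℕ → AOp g) : ℕ → AOp g := fun n => buildD Δ (n+1) n

lemma Dseq_eq {g : ℕ} (Δ : ℕ → AOp g) (n : ℕ) : Dseq Δ n
    = vecField (fun ℓ => MvPolynomial.constantCoeff
        ((Δ (n+1) - psiOp (buildD Δ n) n (n+1)) (MvPolynomial.X ℓ))) := by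
  show Function.update (buildD Δ n) n _ n = _
  rw [Function.update_self]

lemma isDer_Dseq {g : ℕ} (Δ : ℕ → AOp g) : ∀ n, IsDer (Dseq Δ n) := by
  intro n
  rw [Dseq_eq]
  exact isDer_vecField _

lemma commute_Dseq {g : ℕ} (Δ : ℕ → AOp g) (j : Fin g) (n : ℕ) :
    Commute (pderivEnd j) (Dseq Δ n) := by
  rw [Dseq_eq]
  exact commute_vecField _ _

lemma buildD_agree {g : ℕ} (Δ : ℕ → AOp g) : ∀ n m, m < n → buildD Δ n m = Dseq Δ m := by
  intro n
  induction n with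
  | zero => intro m hm; exact absurd hm (by omega)
  | succ n ih =>
    intro m hm
    rcases eq_or_ne m n with rfl | hne
    · rfl
    · show Function.update (buildD Δ n) n _ m = _
      rw [Function.update_of_ne hne]
      exact ih m (by omega)

lemma psiOp_buildD {g : ℕ} (Δ : ℕ → AOp g) (n k : ℕ) :
    psiOp (buildD Δ n) n k = psiOp (Dseq Δ) n k :=
  psiOp_congr n k (fun i hi => buildD_agree Δ n i hi)

lemma forward_div {g N : ℕ} (Δ : ℕ → AOp g) (hΔ0 : Δ 0 = 1)
    (hcomm : ∀ k, 1 ≤ k → k ≤ N → ∀ j, Commute (pderivEnd j) (Δ k))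
    (hL : ∀ f₁ f₂ : MvPolynomial (Fin g) ℂ, ∀ k ≤ N,
      Δ k (f₁ * f₂) = ∑ r ∈ Finset.range (k + 1), Δ r f₁ * Δ (k - r) f₂) :
    ∀ k, 1 ≤ k → k ≤ N → Δ k = psiOp (Dseq Δ) k k := by
  intro k
  induction k using Nat.strong_induction_on with
  | _ k ih =>
    intro hk1 hkN
    obtain ⟨n, rfl⟩ : ∃ n, k = n+1 := ⟨k-1, by omega⟩
    have hmid : ∀ r, 1 ≤ r → r ≤ n → Δ r = psiOp (Dseq Δ) n r := by
      intro r h1 h2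
      rw [ih r (by omega) h1 (by omega)]
      exact (psiOp_ge (Dseq Δ) r n r le_rfl h2).symm
    have hTder : IsDer (Δ (n+1) - psiOp (Dseq Δ) n (n+1)) := by
      intro f₁ f₂
      simp only [LinearMap.sub_apply]
      rw [hL f₁ f₂ (n+1) hkN, psiOp_leibniz (Dseq Δ) (isDer_Dseq Δ) n (n+1) f₁ f₂]
      have hsplitΔ : ∑ r ∈ Finset.range (n+1+1), Δ r f₁ * Δ (n+1-r) f₂
          = ((∑ r ∈ Finset.range n, Δ (r+1) f₁ * Δ (n+1-(r+1)) f₂) + Δ 0 f₁ * Δ (n+1) f₂)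
            + Δ (n+1) f₁ * Δ 0 f₂ := by
        rw [Finset.sum_range_succ, Finset.sum_range_succ']
        simp only [Nat.sub_self, Nat.sub_zero]
      have hsplitψ : ∑ r ∈ Finset.range (n+1+1),
            psiOp (Dseq Δ) n r f₁ * psiOp (Dseq Δ) n (n+1-r) f₂
          = ((∑ r ∈ Finset.range n,
              psiOp (Dseq Δ) n (r+1) f₁ * psiOp (Dseq Δ) n (n+1-(r+1)) f₂)
              + psiOp (Dseq Δ) n 0 f₁ * psiOp (Dseq Δ) n (n+1) f₂)
            + psiOp (Dseq Δ) n (n+1) f₁ * psiOp (Dseq Δ) n 0 f₂ := by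
        rw [Finset.sum_range_succ, Finset.sum_range_succ']
        simp only [Nat.sub_self, Nat.sub_zero]
      rw [hsplitΔ, hsplitψ]
      have hmideq : ∀ r ∈ Finset.range n, Δ (r+1) f₁ * Δ (n+1-(r+1)) f₂
          = psiOp (Dseq Δ) n (r+1) f₁ * psiOp (Dseq Δ) n (n+1-(r+1)) f₂ := by
        intro r hr
        simp only [Finset.mem_range] at hr
        rw [hmid (r+1) (by omega) (by omega), hmid (n+1-(r+1)) (by omega) (by omega)]
      rw [Finset.sum_congr rfl hmideq, hΔ0, psiOp_zero_right]
      simp only [Module.End.one_apply]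
      ring
    have hTcomm : ∀ j, Commute (pderivEnd j) (Δ (n+1) - psiOp (Dseq Δ) n (n+1)) :=
      fun j => Commute.sub_right (hcomm (n+1) (by omega) hkN j)
        (commute_psiOp j (Dseq Δ) (fun i => commute_Dseq Δ j i) n (n+1))
    have hTvec := isDer_eq_vecField _ hTder hTcomm
    have hDn : Dseq Δ n = Δ (n+1) - psiOp (Dseq Δ) n (n+1) := by
      rw [Dseq_eq, hTvec]
      simp only [psiOp_buildD]
    rw [psiOp_split (Dseq Δ) n, hDn]
    abel

theorem curvilinear_operator_formula (g N : ℕ) (hg : 1 ≤ g) (hN : 1 ≤ N)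
    (Δ : ℕ → Module.End ℂ (MvPolynomial (Fin g) ℂ))
    (hΔ0 : Δ 0 = 1)
    (horder : ∀ k, 1 ≤ k → k ≤ N →
      ∃ (s : Finset (Fin g →₀ ℕ)) (c : (Fin g →₀ ℕ) → ℂ),
        (∀ m ∈ s, (m.sum fun _ e => e) ≤ k) ∧ Δ k = ∑ m ∈ s, c m • monomialOp m) :
    ((∀ f₁ f₂ : MvPolynomial (Fin g) ℂ, ∀ k ≤ N,
        Δ k (f₁ * f₂) = ∑ r ∈ Finset.range (k + 1), Δ r f₁ * Δ (k - r) f₂)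
      ↔
     (∃ η : Fin N → (Fin g → ℂ), ∀ (k : ℕ) (_ : 1 ≤ k) (hkN : k ≤ N),
        Δ k = deltaFormula k (fun i => vecField (η (Fin.castLE hkN i))))) := by
  constructor
  · intro hL
    have hcommΔ : ∀ k, 1 ≤ k → k ≤ N → ∀ j, Commute (pderivEnd j) (Δ k) := by
      intro k h1 h2 j
      obtain ⟨s, c, _, hrepr⟩ := horder k h1 h2
      rw [hrepr]
      apply Commute.sum_right
      intro m _
      exact (commute_monomialOp j m).smul_right _
    have hfwd := forward_div Δ hΔ0 hcommΔ hL
    refine ⟨fun i => (fun ℓ => MvPolynomial.constantCoeff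
      ((Δ (i.1+1) - psiOp (buildD Δ i.1) i.1 (i.1+1)) (MvPolynomial.X ℓ))), ?_⟩
    intro k hk1 hkN
    rw [hfwd k hk1 hkN, ← deltaFormula_eq_psiOp (Dseq Δ) k]
    congr 1
    funext i
    rw [Dseq_eq]
    rfl
  · rintro ⟨η, hη⟩
    intro f₁ f₂ k hkN
    set D : ℕ → AOp g := fun n => if h : n < N then vecField (η ⟨n, h⟩)
      else vecField (fun _ => 0) with hD
    have hDder : ∀ i, IsDer (D i) := by
      intro i
      rw [hD]
      dsimp only
      split_ifs
      · exact isDer_vecField _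
      · exact isDer_vecField _
    have hΔψ : ∀ r, 1 ≤ r → r ≤ N → Δ r = psiOp D r r := by
      intro r h1 h2
      rw [hη r h1 h2, ← deltaFormula_eq_psiOp D r]
      congr 1
      funext i
      have hiN : (i.1 : ℕ) < N := lt_of_lt_of_le i.2 h2
      rw [hD]
      dsimp only
      rw [dif_pos hiN]
      rfl
    have hall : ∀ r, r ≤ k → Δ r = psiOp D k r := by
      intro r hrk
      rcases Nat.eq_zero_or_pos r with rfl | hr0
      · rw [hΔ0, psiOp_zero_right]
      · rw [hΔψ r hr0 (le_trans hrk hkN)]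
        exact (psiOp_ge D r k r le_rfl hrk).symm
    rcases Nat.eq_zero_or_pos k with rfl | hk
    · simp [hΔ0]
    · rw [hall k le_rfl, psiOp_leibniz D hDder k k f₁ f₂]
      refine Finset.sum_congr rfl fun r hr => ?_
      simp only [Finset.mem_range] at hr
      rw [hall r (by omega), hall (k-r) (by omega)]
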